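/- Let L be a field of characteristic p and n ≥ 0. Then the ring R = L[X_1,…,X_n]/⟨X_1^p,…,X_n^p⟩ is differentiably simple, i.e., the only ideals of R stable under all derivations of R are 0 and R. -/

import Mathlib

/-- An ideal is *differential* if it is stable under every derivation of the ring. -/
def Ideal.IsDifferential {R : Type*} [CommRing R] (I : Ideal R) : Prop :=
  ∀ D : Derivation ℤ R R, ∀ x ∈ I, D x ∈ I

/-- A commutative ring is *differentiably simple* if its only differential ideals
are `⊥` and `⊤`. -/
def IsDifferentiablySimple (R : Type*) [CommRing R] : Prop :=
  ∀ I : Ideal R, I.IsDifferential → I = ⊥ ∨ I = ⊤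

set_option maxHeartbeats 1000000
set_option synthInstance.maxHeartbeats 1000000

open MvPolynomial Finsupp

namespace DSimpleAux

variable {p : ℕ} {L : Type*} [Field L] {n : ℕ}

local notation "J" => (Ideal.span (Set.range fun i : Fin n => (MvPolynomial.X i : MvPolynomial (Fin n) L) ^ p))

theorem mem_J_iff {f : MvPolynomial (Fin n) L} :
    f ∈ J ↔ ∀ m ∈ f.support, ∃ i : Fin n, p ≤ m i := by
  have : (Set.range fun i : Fin n => (MvPolynomial.X i : MvPolynomial (Fin n) L) ^ p)
      = (fun s => monomial s (1 : L)) '' (Set.range fun i : Fin n => Finsupp.single i p) := by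
    ext g
    simp [X_pow_eq_monomial, Set.range_comp]
  rw [this, mem_ideal_span_monomial_image]
  constructor
  · intro h m hm
    obtain ⟨s, ⟨i, rfl⟩, hs⟩ := h m hm
    exact ⟨i, (Finsupp.single_le_iff.mp hs)⟩
  · intro h m hm
    obtain ⟨i, hi⟩ := h m hm
    exact ⟨Finsupp.single i p, ⟨i, rfl⟩, Finsupp.single_le_iff.mpr hi⟩

theorem coeff_pderiv (m : Fin n →₀ ℕ) (i : Fin n) (f : MvPolynomial (Fin n) L) :
    coeff m (pderiv i f) = (m i + 1 : ℕ) * coeff (m + Finsupp.single i 1) f := by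
  classical
  induction f using MvPolynomial.induction_on' with
  | monomial s a =>
    rw [pderiv_monomial, coeff_monomial, coeff_monomial]
    by_cases h : s = m + Finsupp.single i 1
    · subst h
      have h1 : m + Finsupp.single i 1 - Finsupp.single i 1 = m := by
        ext j; simp [Finsupp.single_apply]
      have h2 : (m + Finsupp.single i 1 : Fin n →₀ ℕ) i = m i + 1 := by
        rw [Finsupp.add_apply, Finsupp.single_eq_same]
      rw [if_pos h1, if_pos rfl, h2, mul_comm]
    · rw [if_neg h, mul_zero]
      by_cases h2 : s - Finsupp.single i 1 = m
      · rw [if_pos h2]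
        have : s i = 0 := by
          by_contra hs
          apply h
          rw [← h2]
          ext j
          rcases eq_or_ne j i with rfl | hj
          · simp [Nat.sub_add_cancel (Nat.one_le_iff_ne_zero.mpr hs)]
          · simp [Finsupp.single_apply, hj.symm, Ne.symm hj]
        simp [this]
      · rw [if_neg h2]
  | add f g hf hg => simp [map_add, coeff_add, hf, hg, mul_add]

end DSimpleAux

namespace Part2
open DSimpleAux
variable {p : ℕ} {L : Type*} [Field L] {n : ℕ}

local notation "J" => (Ideal.span (Set.range fun i : Fin n => (MvPolynomial.X i : MvPolynomial (Fin n) L) ^ p))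

theorem pderiv_mem [CharP L p] (i : Fin n) {f : MvPolynomial (Fin n) L} (hf : f ∈ J) :
    pderiv i f ∈ J := by
  induction hf using Submodule.span_induction with
  | mem x hx =>
    obtain ⟨j, rfl⟩ := hx
    rw [pderiv_pow]
    have : ((p : ℕ) : MvPolynomial (Fin n) L) = 0 := CharP.cast_eq_zero _ p
    simp [this]
  | zero => simp
  | add x y hx hy ihx ihy => rw [map_add]; exact Ideal.add_mem _ ihx ihy
  | smul a x hx ih =>
    rw [smul_eq_mul, pderiv_mul]
    exact Ideal.add_mem _ (Ideal.mul_mem_left _ _ hx) (Ideal.mul_mem_left _ _ ih)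

/-- `f` is reduced: all exponents `< p`. -/
def Red (p : ℕ) (f : MvPolynomial (Fin n) L) : Prop := ∀ m ∈ f.support, ∀ i, m i < p

theorem red_eq_zero {f : MvPolynomial (Fin n) L} (hf : Red p f) (hJ : f ∈ J) : f = 0 := by
  by_contra h
  obtain ⟨m, hm⟩ := (MvPolynomial.support_nonempty.mpr h)
  obtain ⟨i, hi⟩ := mem_J_iff.mp hJ m hm
  exact absurd (hf m hm i) (not_lt.mpr hi)

theorem coeff_add_single_ne_zero {i : Fin n} {f : MvPolynomial (Fin n) L} {m' : Fin n →₀ ℕ}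
    (h : m' ∈ (pderiv i f).support) : (m' + Finsupp.single i 1) ∈ f.support := by
  have h2 := MvPolynomial.mem_support_iff.mp h
  rw [DSimpleAux.coeff_pderiv] at h2
  rw [MvPolynomial.mem_support_iff]
  intro h0
  rw [h0, mul_zero] at h2
  exact h2 rfl

theorem red_pderiv {i : Fin n} {f : MvPolynomial (Fin n) L} (hf : Red p f) :
    Red p (pderiv i f) := by
  intro m' hm' j
  have hm := coeff_add_single_ne_zero hm'
  calc m' j ≤ (m' + Finsupp.single i 1 : Fin n →₀ ℕ) j := by simp
    _ < p := hf _ hm j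

theorem deg_add_single (m' : Fin n →₀ ℕ) (i : Fin n) :
    ((m' + Finsupp.single i 1 : Fin n →₀ ℕ).sum fun _ e => e)
      = (m'.sum fun _ e => e) + 1 := by
  rw [Finsupp.sum_add_index' (fun _ => rfl) (fun _ _ _ => rfl),
    Finsupp.sum_single_index rfl]

theorem totalDegree_pderiv_lt {i : Fin n} {f : MvPolynomial (Fin n) L}
    (h : pderiv i f ≠ 0) : (pderiv i f).totalDegree < f.totalDegree := by
  have hpos : 0 < f.totalDegree := by
    obtain ⟨m', hm'⟩ := MvPolynomial.support_nonempty.mpr h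
    have := MvPolynomial.le_totalDegree (coeff_add_single_ne_zero hm')
    rw [deg_add_single] at this
    omega
  rw [MvPolynomial.totalDegree]
  rw [Finset.sup_lt_iff (by exact hpos)]
  intro m' hm'
  have := MvPolynomial.le_totalDegree (coeff_add_single_ne_zero hm')
  rw [deg_add_single] at this
  omega

theorem red_const [CharP L p] {f : MvPolynomial (Fin n) L} (hred : Red p f)
    (hall : ∀ i, pderiv i f = 0) : ∃ c, f = MvPolynomial.C c := by
  refine ⟨MvPolynomial.coeff 0 f, MvPolynomial.ext _ _ fun m => ?_⟩
  rw [MvPolynomial.coeff_C]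
  rcases eq_or_ne (0 : Fin n →₀ ℕ) m with rfl | hm
  · rw [if_pos rfl]
  · rw [if_neg hm]
    by_contra h0
    have hmem : m ∈ f.support := MvPolynomial.mem_support_iff.mpr h0
    obtain ⟨i, hi⟩ : ∃ i, m i ≠ 0 := by
      by_contra hc
      push_neg at hc
      exact hm ((Finsupp.ext hc).symm)
    have key := coeff_pderiv (m - Finsupp.single i 1) i f
    have hsub : (m - Finsupp.single i 1) + Finsupp.single i 1 = m := by
      ext j
      rcases eq_or_ne j i with rfl | hj
      · simp [Nat.sub_add_cancel (Nat.one_le_iff_ne_zero.mpr hi)]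
      · simp [Finsupp.single_apply, Ne.symm hj]
    have hii : (m - Finsupp.single i 1 : Fin n →₀ ℕ) i = m i - 1 := by simp
    rw [hall i, hsub, hii] at key
    have hcast : ((m i - 1 + 1 : ℕ) : L) = (m i : L) := by
      rw [Nat.sub_add_cancel (Nat.one_le_iff_ne_zero.mpr hi)]
    rw [MvPolynomial.coeff_zero] at key
    rw [hcast] at key
    have : (m i : L) = 0 := by
      rcases mul_eq_zero.mp key.symm with h | h
      · exact h
      · exact absurd h h0
    have hdvd := (CharP.cast_eq_zero_iff L p _).mp this
    have hlt := hred m hmem i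
    exact absurd hlt (not_lt.mpr (Nat.le_of_dvd (Nat.pos_of_ne_zero hi) hdvd))

theorem exists_red (f : MvPolynomial (Fin n) L) :
    ∃ g, Red p g ∧ f - g ∈ J := by
  classical
  refine ⟨∑ m ∈ f.support.filter (fun m => ∀ i, m i < p),
    MvPolynomial.monomial m (MvPolynomial.coeff m f), ?_, ?_⟩
  · intro m hm i
    obtain ⟨m', hm', hmem⟩ := Finset.mem_biUnion.mp (MvPolynomial.support_sum hm)
    have hc := MvPolynomial.mem_support_iff.mp hmem
    rw [MvPolynomial.coeff_monomial] at hc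
    have : m' = m := by by_contra hne; exact hc (if_neg hne)
    subst this
    exact (Finset.mem_filter.mp hm').2 i
  · have hsplit : (∑ m ∈ f.support.filter (fun m => ∀ i, m i < p),
        MvPolynomial.monomial m (MvPolynomial.coeff m f))
        + (∑ m ∈ f.support.filter (fun m => ¬ ∀ i, m i < p),
        MvPolynomial.monomial m (MvPolynomial.coeff m f)) = f := by
      rw [Finset.sum_filter_add_sum_filter_not]
      exact MvPolynomial.support_sum_monomial_coeff f
    have heq : f - (∑ m ∈ f.support.filter (fun m => ∀ i, m i < p),
        MvPolynomial.monomial m (MvPolynomial.coeff m f))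
        = ∑ m ∈ f.support.filter (fun m => ¬ ∀ i, m i < p),
        MvPolynomial.monomial m (MvPolynomial.coeff m f) := by
      exact sub_eq_of_eq_add' hsplit.symm
    rw [heq]
    refine Ideal.sum_mem _ fun m hm => ?_
    rw [mem_J_iff]
    intro m' hm'
    have hc := MvPolynomial.mem_support_iff.mp hm'
    rw [MvPolynomial.coeff_monomial] at hc
    have hmm : m = m' := by by_contra hne; exact hc (if_neg hne)
    subst hmm
    obtain ⟨i, hi⟩ := not_forall.mp (Finset.mem_filter.mp hm).2
    exact ⟨i, not_lt.mp hi⟩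

end Part2

namespace Part3
open DSimpleAux Part2
variable {p : ℕ} {L : Type*} [Field L] {n : ℕ} [CharP L p]

local notation "J" => (Ideal.span (Set.range fun i : Fin n => (MvPolynomial.X i : MvPolynomial (Fin n) L) ^ p))
local notation "mk" => (Ideal.Quotient.mk (Ideal.span (Set.range fun i : Fin n => (MvPolynomial.X i : MvPolynomial (Fin n) L) ^ p)))

noncomputable def Dfun (i : Fin n) :
    (MvPolynomial (Fin n) L ⧸ J) → (MvPolynomial (Fin n) L ⧸ J) :=
  fun x => mk (pderiv i (Ideal.Quotient.mk_surjective x).choose)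

theorem Dfun_mk (i : Fin n) (f : MvPolynomial (Fin n) L) :
    Dfun i (mk f) = mk (pderiv i f) := by
  have hg : mk (Ideal.Quotient.mk_surjective (mk f)).choose = mk f :=
    (Ideal.Quotient.mk_surjective (mk f)).choose_spec
  have hsub : (Ideal.Quotient.mk_surjective (mk f)).choose - f ∈ J :=
    Ideal.Quotient.eq.mp hg
  have : pderiv i ((Ideal.Quotient.mk_surjective (mk f)).choose) - pderiv i f ∈ J := by
    rw [← map_sub]
    exact pderiv_mem i hsub
  exact Ideal.Quotient.eq.mpr this

noncomputable def D (i : Fin n) :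
    Derivation ℤ (MvPolynomial (Fin n) L ⧸ J) (MvPolynomial (Fin n) L ⧸ J) where
  toLinearMap := (AddMonoidHom.mk' (Dfun i) (by
    intro x y
    obtain ⟨f, rfl⟩ := Ideal.Quotient.mk_surjective x
    obtain ⟨g, rfl⟩ := Ideal.Quotient.mk_surjective y
    rw [← map_add, Dfun_mk, Dfun_mk, Dfun_mk, map_add, map_add])).toIntLinearMap
  map_one_eq_zero' := by
    show Dfun i 1 = 0
    have : (1 : MvPolynomial (Fin n) L ⧸ J) = mk 1 := (map_one _).symm
    rw [this, Dfun_mk]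
    simp
  leibniz' := by
    intro a b
    obtain ⟨f, rfl⟩ := Ideal.Quotient.mk_surjective a
    obtain ⟨g, rfl⟩ := Ideal.Quotient.mk_surjective b
    show Dfun i (mk f * mk g) = mk f • Dfun i (mk g) + mk g • Dfun i (mk f)
    rw [← map_mul, Dfun_mk, Dfun_mk, Dfun_mk, pderiv_mul, map_add, smul_eq_mul, smul_eq_mul,
      map_mul, map_mul]
    ring

theorem D_apply (i : Fin n) (f : MvPolynomial (Fin n) L) :
    D i (mk f) = mk (pderiv i f) := Dfun_mk i f

end Part3

theorem stmt2 (p : ℕ) (hp : p.Prime) (L : Type*) [Field L] [CharP L p] (n : ℕ) :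
    IsDifferentiablySimple
      (MvPolynomial (Fin n) L ⧸
        Ideal.span (Set.range fun i : Fin n => (MvPolynomial.X i : MvPolynomial (Fin n) L) ^ p)) := by
  classical
  intro I hI
  rw [or_iff_not_imp_left]
  intro hbot
  obtain ⟨x, hxI, hx0⟩ := Submodule.exists_mem_ne_zero_of_ne_bot hbot
  obtain ⟨f, rfl⟩ := Ideal.Quotient.mk_surjective x
  obtain ⟨g, hgred, hgJ⟩ := Part2.exists_red (p := p) f
  have hmk : Ideal.Quotient.mk _ g = Ideal.Quotient.mk _ f :=
    Ideal.Quotient.eq.mpr (by simpa using (Submodule.neg_mem _ hgJ))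
  have key : ∀ d : ℕ, ∀ g : MvPolynomial (Fin n) L, g.totalDegree ≤ d → Part2.Red p g →
      Ideal.Quotient.mk (Ideal.span (Set.range fun i : Fin n =>
        (MvPolynomial.X i : MvPolynomial (Fin n) L) ^ p)) g ∈ I →
      Ideal.Quotient.mk (Ideal.span (Set.range fun i : Fin n =>
        (MvPolynomial.X i : MvPolynomial (Fin n) L) ^ p)) g ≠ 0 → I = ⊤ := by
    intro d
    induction d using Nat.strong_induction_on with
    | _ d ih =>
      intro g hdeg hred hmem hne
      by_cases hall : ∀ i, MvPolynomial.pderiv i g = 0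
      · obtain ⟨c, rfl⟩ := Part2.red_const hred hall
        have hc : c ≠ 0 := by rintro rfl; simp at hne
        apply Ideal.eq_top_of_isUnit_mem _ hmem
        refine IsUnit.of_mul_eq_one (Ideal.Quotient.mk _ (MvPolynomial.C c⁻¹)) ?_
        rw [← map_mul, ← MvPolynomial.C_mul, mul_inv_cancel₀ hc, MvPolynomial.C_1, map_one]
      · push_neg at hall
        obtain ⟨i, hi⟩ := hall
        have h1 : Part2.Red p (MvPolynomial.pderiv i g) := Part2.red_pderiv hred
        have h2 : Ideal.Quotient.mk _ (MvPolynomial.pderiv i g) ∈ I := by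
          have := hI (Part3.D i) _ hmem
          change Part3.Dfun (p := p) i _ ∈ I at this
          rwa [Part3.Dfun_mk] at this
        have h3 : Ideal.Quotient.mk (Ideal.span (Set.range fun i : Fin n =>
            (MvPolynomial.X i : MvPolynomial (Fin n) L) ^ p)) (MvPolynomial.pderiv i g) ≠ 0 := by
          intro h0
          exact hi (Part2.red_eq_zero h1 (Ideal.Quotient.eq_zero_iff_mem.mp h0))
        exact ih (MvPolynomial.pderiv i g).totalDegree
          (lt_of_lt_of_le (Part2.totalDegree_pderiv_lt hi) hdeg) _ le_rfl h1 h2 h3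
  exact key g.totalDegree g le_rfl hgred (hmk ▸ hxI) (hmk ▸ hx0)
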